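/- The map f ↦ B_f from a Boolean algebra B to the lattice of subsets of Spec(B) is an injective Boolean algebra homomorphism; equivalently, the evaluation map B → 2^{Spec(B)} sending f to (p ↦ (f ∉ p)) is an injective Boolean algebra homomorphism (Stone representation). -/
import Mathlib


/-- An (order) ideal of a Boolean algebra: nonempty, downward closed, closed under finite joins. -/
def IsIdealBA {B : Type*} [BooleanAlgebra B] (p : Set B) : Prop :=
  p.Nonempty ∧ (∀ x ∈ p, ∀ y, y ≤ x → y ∈ p) ∧ (∀ x ∈ p, ∀ y ∈ p, x ⊔ y ∈ p)

/-- A prime ideal: a proper ideal such that `x ⊓ y ∈ p` implies `x ∈ p` or `y ∈ p`. -/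
def IsPrimeIdealBA {B : Type*} [BooleanAlgebra B] (p : Set B) : Prop :=
  IsIdealBA p ∧ p ≠ Set.univ ∧ ∀ x y : B, x ⊓ y ∈ p → x ∈ p ∨ y ∈ p

/-- A filter of a Boolean algebra: nonempty, upward closed, closed under finite meets. -/
def IsFilterBA {B : Type*} [BooleanAlgebra B] (F : Set B) : Prop :=
  F.Nonempty ∧ (∀ x ∈ F, ∀ y, x ≤ y → y ∈ F) ∧ (∀ x ∈ F, ∀ y ∈ F, x ⊓ y ∈ F)

/-- An ultrafilter: a proper filter containing `x` or `xᶜ` for every `x`. -/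
def IsUltrafilterBA {B : Type*} [BooleanAlgebra B] (F : Set B) : Prop :=
  IsFilterBA F ∧ F ≠ Set.univ ∧ ∀ x : B, x ∈ F ∨ xᶜ ∈ F

/-- The Stone spectrum: the set of prime ideals of `B`. -/
def SpecBA (B : Type*) [BooleanAlgebra B] : Type _ := {p : Set B // IsPrimeIdealBA p}

/-- The basic set `B_f = { p ∈ Spec B : f ∉ p }`. -/
def basicSet {B : Type*} [BooleanAlgebra B] (f : B) : Set (SpecBA B) := {p | f ∉ p.1}

/-- The Stone topology on `Spec B`, generated by the basic sets. -/
instance specTopology (B : Type*) [BooleanAlgebra B] : TopologicalSpace (SpecBA B) :=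
  TopologicalSpace.generateFrom (Set.range (basicSet (B := B)))


private lemma primeBA_of_sep {B : Type*} [BooleanAlgebra B] {f g : B} (h : ¬ f ≤ g) :
    ∃ p : Set B, IsPrimeIdealBA p ∧ g ∈ p ∧ f ∉ p := by
  have hdisj : Disjoint ((Order.PFilter.principal f : Order.PFilter B) : Set B)
      ((Order.Ideal.principal g : Order.Ideal B) : Set B) := by
    rw [Set.disjoint_left]
    intro x hx hx'
    exact h (le_trans hx hx')
  obtain ⟨J, hJprime, hIJ, hJF⟩ :=
    DistribLattice.prime_ideal_of_disjoint_filter_ideal hdisj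
  refine ⟨(J : Set B), ⟨⟨J.nonempty, fun x hx y hy => J.lower hy hx,
      fun x hx y hy => J.sup_mem hx hy⟩, ?_, fun x y hxy => hJprime.mem_or_mem hxy⟩,
      hIJ (Order.Ideal.mem_principal.2 le_rfl), ?_⟩
  · intro hu
    have htop : (⊤ : B) ∈ (J : Set B) := by rw [hu]; exact Set.mem_univ _
    have : J.IsProper := hJprime.toIsProper
    exact hJprime.toIsProper.top_notMem htop
  · intro hf
    exact Set.disjoint_left.1 hJF (Order.PFilter.mem_principal.2 le_rfl) hf

private lemma bot_memBA {B : Type*} [BooleanAlgebra B] {p : Set B} (hp : IsPrimeIdealBA p) :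
    (⊥ : B) ∈ p := by
  obtain ⟨⟨⟨x, hx⟩, hdown, _⟩, _, _⟩ := hp
  exact hdown x hx ⊥ bot_le

private lemma top_notMemBA {B : Type*} [BooleanAlgebra B] {p : Set B} (hp : IsPrimeIdealBA p) :
    (⊤ : B) ∉ p := by
  intro h
  exact hp.2.1 (Set.eq_univ_of_forall fun x => hp.1.2.1 ⊤ h x le_top)

/-- Stone representation: `f ↦ B_f` is an injective Boolean algebra homomorphism
from `B` into the powerset Boolean algebra of `Spec B`. -/
theorem stmt_4 {B : Type*} [BooleanAlgebra B] :
    Function.Injective (basicSet (B := B)) ∧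
    (∀ f g : B, basicSet (f ⊓ g) = basicSet f ∩ basicSet g) ∧
    (∀ f g : B, basicSet (f ⊔ g) = basicSet f ∪ basicSet g) ∧
    (∀ f : B, basicSet fᶜ = (basicSet f)ᶜ) ∧
    basicSet (⊥ : B) = (∅ : Set (SpecBA B)) ∧
    basicSet (⊤ : B) = (Set.univ : Set (SpecBA B)) := by

  have hmeet : ∀ f g : B, basicSet (f ⊓ g) = basicSet f ∩ basicSet g := by
    intro f g
    ext p
    simp only [basicSet, Set.mem_setOf_eq, Set.mem_inter_iff]
    constructor
    · intro h
      exact ⟨fun hf => h (p.2.1.2.1 f hf _ inf_le_left),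
             fun hg => h (p.2.1.2.1 g hg _ inf_le_right)⟩
    · rintro ⟨hf, hg⟩ h
      rcases p.2.2.2 f g h with h' | h' <;> [exact hf h'; exact hg h']
  have hjoin : ∀ f g : B, basicSet (f ⊔ g) = basicSet f ∪ basicSet g := by
    intro f g
    ext p
    simp only [basicSet, Set.mem_setOf_eq, Set.mem_union]
    constructor
    · intro h
      by_contra hc
      push_neg at hc
      exact h (p.2.1.2.2 f hc.1 g hc.2)
    · rintro (hf | hf) h
      · exact hf (p.2.1.2.1 _ h f le_sup_left)
      · exact hf (p.2.1.2.1 _ h g le_sup_right)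
  have hcompl : ∀ f : B, basicSet fᶜ = (basicSet f)ᶜ := by
    intro f
    ext p
    simp only [basicSet, Set.mem_setOf_eq, Set.mem_compl_iff, not_not]
    constructor
    · intro h
      rcases p.2.2.2 f fᶜ (by rw [inf_compl_eq_bot]; exact bot_memBA p.2) with h' | h'
      · exact h'
      · exact absurd h' h
    · intro hf hfc
      exact top_notMemBA p.2 (by rw [← sup_compl_eq_top (x := f)]; exact p.2.1.2.2 f hf fᶜ hfc)
  refine ⟨?_, hmeet, hjoin, hcompl, ?_, ?_⟩
  · intro f g hfg
    by_contra hne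
    rcases (not_and_or.1 fun h : f ≤ g ∧ g ≤ f => hne (le_antisymm h.1 h.2)) with h | h
    · obtain ⟨p, hp, hg, hf⟩ := primeBA_of_sep h
      have : (⟨p, hp⟩ : SpecBA B) ∈ basicSet f := hf
      rw [hfg] at this
      exact this hg
    · obtain ⟨p, hp, hg, hf⟩ := primeBA_of_sep h
      have : (⟨p, hp⟩ : SpecBA B) ∈ basicSet g := hf
      rw [← hfg] at this
      exact this hg
  · ext p
    simp only [basicSet, Set.mem_setOf_eq, Set.mem_empty_iff_false, iff_false, not_not]
    exact bot_memBA p.2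
  · ext p
    simp only [basicSet, Set.mem_setOf_eq, Set.mem_univ, iff_true]
    exact top_notMemBA p.2
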